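/- Let T_h be a compact self-adjoint operator on L, let χ_h be a nonzero eigenvalue of T_h with eigenspace E_h := ker(T_h − χ_h·id), and let χ ∈ ℝ and δ > 0 be such that |μ − χ| ≥ δ for every μ ∈ spectrum(T_h) \ {χ_h}. Then for every unit vector w ∈ L, the distance from w to E_h satisfies dist(w, E_h) ≤ ‖T_h w − χ w‖ / δ. -/

import Mathlib

open scoped ComplexConjugate

local notation "⟪" x ", " y "⟫" => @inner ℂ _ _ x y

/-- A selfadjoint bounded-below operator on a complex Hilbert space is invertible. -/
lemma aux_selfAdjoint_boundedBelow_isUnit {H : Type*} [NormedAddCommGroup H]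
    [InnerProductSpace ℂ H] [CompleteSpace H] (A : H →L[ℂ] H) (hA : IsSelfAdjoint A)
    {c : ℝ} (hc : 0 < c) (hbb : ∀ v, c * ‖v‖ ≤ ‖A v‖) : IsUnit A := by
  have hsym := ContinuousLinearMap.isSelfAdjoint_iff_isSymmetric.mp hA
  have hker : ∀ x, A x = 0 → x = 0 := by
    intro x hx
    have h2 := hbb x
    rw [hx, norm_zero] at h2
    have h3 : ‖x‖ ≤ 0 := by nlinarith [norm_nonneg x]
    exact norm_eq_zero.mp (le_antisymm h3 (norm_nonneg x))
  rw [ContinuousLinearMap.isUnit_iff_bijective]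
  constructor
  · intro x y hxy
    have : A (x - y) = 0 := by rw [map_sub, hxy, sub_self]
    have := hker _ this
    exact sub_eq_zero.mp this
  · -- surjectivity
    have hanti : AntilipschitzWith (⟨c, hc.le⟩ : NNReal)⁻¹ ⇑A := by
      refine ContinuousLinearMap.antilipschitz_of_bound A fun x => ?_
      have h1 := hbb x
      show ‖x‖ ≤ c⁻¹ * ‖A x‖
      have h2 := mul_le_mul_of_nonneg_left h1 (inv_nonneg.mpr hc.le)
      rwa [← mul_assoc, inv_mul_cancel₀ hc.ne', one_mul] at h2
    have hclosed : IsClosed (Set.range ⇑A) := hanti.isClosed_range A.uniformContinuous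
    have hclosed' : IsClosed ((LinearMap.range (A : H →ₗ[ℂ] H) : Submodule ℂ H) : Set H) := by
      simpa [LinearMap.coe_range] using hclosed
    haveI : CompleteSpace (LinearMap.range (A : H →ₗ[ℂ] H)) := hclosed'.completeSpace_coe
    have horth : (LinearMap.range (A : H →ₗ[ℂ] H))ᗮ = ⊥ := by
      rw [Submodule.eq_bot_iff]
      intro v hv
      have h1 : ⟪A (A v), v⟫ = 0 :=
        (Submodule.mem_orthogonal _ v).mp hv _ ⟨A v, rfl⟩
      have h2 : ⟪A v, A v⟫ = 0 := by
        have := hsym (A v) v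
        simp only [ContinuousLinearMap.coe_coe] at this
        rw [← this]; exact h1
      have h3 : A v = 0 := inner_self_eq_zero.mp h2
      exact hker v h3
    have hrange : LinearMap.range (A : H →ₗ[ℂ] H) = ⊤ := Submodule.orthogonal_eq_bot_iff.mp horth
    exact LinearMap.range_eq_top.mp hrange

/-- If a selfadjoint invertible operator has spectrum at distance `≥ δ` from `0`,
then it is bounded below by `δ`. -/
lemma aux_unit_bound {H : Type*} [NormedAddCommGroup H] [InnerProductSpace ℂ H]
    [CompleteSpace H] (A : H →L[ℂ] H) (hA : IsSelfAdjoint A) {δ : ℝ} (hδ : 0 < δ)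
    (hspec : ∀ z ∈ spectrum ℂ A, δ ≤ ‖z‖) (hunit : IsUnit A) (v : H) :
    δ * ‖v‖ ≤ ‖A v‖ := by
  obtain ⟨u, hu⟩ := hunit
  have hstar : star (↑u : H →L[ℂ] H) = ↑u := by rw [hu]; exact hA
  have hinv_sa : IsSelfAdjoint ((↑u⁻¹ : H →L[ℂ] H)) := by
    show star _ = _
    calc star (↑u⁻¹ : H →L[ℂ] H)
        = star ↑u⁻¹ * (↑u * ↑u⁻¹) := by rw [u.mul_inv, mul_one]
      _ = (star ↑u⁻¹ * star ↑u) * ↑u⁻¹ := by rw [hstar, mul_assoc]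
      _ = star ((↑u : H →L[ℂ] H) * ↑u⁻¹) * ↑u⁻¹ := by rw [star_mul]
      _ = ↑u⁻¹ := by rw [u.mul_inv, star_one, one_mul]
  have hz : ∀ z ∈ spectrum ℂ ((↑u⁻¹ : H →L[ℂ] H)), ‖z‖₊ ≤ ‖(δ⁻¹ : ℝ)‖₊ := by
    intro z hzmem
    have hz0 : z ≠ 0 := spectrum.ne_zero_of_mem_of_unit hzmem
    have hzmem' : ((Units.mk0 z hz0 : ℂˣ) : ℂ) ∈ spectrum ℂ ((u⁻¹ : (H →L[ℂ] H)ˣ) : H →L[ℂ] H) :=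
      hzmem
    have hmem := (spectrum.inv_mem_iff (r := Units.mk0 z hz0) (a := u⁻¹)).mp hzmem'
    rw [inv_inv] at hmem
    have hmem' : z⁻¹ ∈ spectrum ℂ A := by
      rw [← hu]
      exact_mod_cast hmem
    have hz' : δ ≤ ‖z⁻¹‖ := hspec _ hmem'
    have hzpos : 0 < ‖z‖ := norm_pos_iff.mpr hz0
    rw [norm_inv] at hz'
    have h3 : ‖z‖ * δ ≤ 1 := by
      have := mul_le_mul_of_nonneg_left hz' hzpos.le
      rw [mul_inv_cancel₀ hzpos.ne'] at this
      linarith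
    have h4 : ‖z‖ ≤ δ⁻¹ := by
      rw [← one_div]
      exact (le_div_iff₀ hδ).mpr h3
    have : ‖(δ⁻¹ : ℝ)‖ = δ⁻¹ := by
      rw [Real.norm_eq_abs, abs_of_nonneg (by positivity)]
    rw [← NNReal.coe_le_coe, coe_nnnorm, coe_nnnorm, this]
    exact h4
  have hrad : spectralRadius ℂ ((↑u⁻¹ : H →L[ℂ] H)) ≤ (‖(δ⁻¹ : ℝ)‖₊ : ENNReal) := by
    rw [spectralRadius]
    exact iSup₂_le fun z hzm => by exact_mod_cast hz z hzm
  rw [hinv_sa.spectralRadius_eq_nnnorm] at hrad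
  have hn : ‖(↑u⁻¹ : H →L[ℂ] H)‖ ≤ δ⁻¹ := by
    have h1 : ‖(↑u⁻¹ : H →L[ℂ] H)‖₊ ≤ ‖(δ⁻¹ : ℝ)‖₊ := by exact_mod_cast hrad
    have h2 : ‖(↑u⁻¹ : H →L[ℂ] H)‖ ≤ ‖(δ⁻¹ : ℝ)‖ := h1
    rwa [Real.norm_eq_abs, abs_of_nonneg (by positivity)] at h2
  have key : (↑u⁻¹ : H →L[ℂ] H) (A v) = v := by
    rw [← hu, ← ContinuousLinearMap.mul_apply, u.inv_mul, ContinuousLinearMap.one_apply]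
  calc δ * ‖v‖ = δ * ‖(↑u⁻¹ : H →L[ℂ] H) (A v)‖ := by rw [key]
    _ ≤ δ * (‖(↑u⁻¹ : H →L[ℂ] H)‖ * ‖A v‖) := by
        gcongr
        exact ContinuousLinearMap.le_opNorm _ _
    _ ≤ δ * (δ⁻¹ * ‖A v‖) := by
        gcongr
    _ = ‖A v‖ := by field_simp

/-- Quantitative injectivity modulo the eigenspace, from compactness. -/
lemma aux_compact_boundedBelow {L : Type*} [NormedAddCommGroup L] [InnerProductSpace ℂ L]
    [CompleteSpace L] (Th : L →L[ℂ] L) (hThc : IsCompactOperator ⇑Th)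
    (χh : ℂ) (hχh : χh ≠ 0) (M : Submodule ℂ L) (hMclosed : IsClosed (M : Set L))
    (hdisj : ∀ z ∈ M, Th z = χh • z → z = 0) :
    ∃ c > 0, ∀ v ∈ M, c * ‖v‖ ≤ ‖Th v - χh • v‖ := by
  by_contra hcon
  push_neg at hcon
  have hcon' : ∀ n : ℕ, ∃ v ∈ M, ‖Th v - χh • v‖ < ((n : ℝ) + 1)⁻¹ * ‖v‖ := by
    intro n
    exact hcon ((n : ℝ) + 1)⁻¹ (by positivity)
  choose v hvM hvlt using hcon'
  have hv0 : ∀ n, v n ≠ 0 := by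
    intro n hn
    have := hvlt n
    rw [hn] at this
    simp at this
  set w : ℕ → L := fun n => (‖v n‖ : ℂ)⁻¹ • v n with hw
  have hwM : ∀ n, w n ∈ M := fun n => M.smul_mem _ (hvM n)
  have hwnorm : ∀ n, ‖w n‖ = 1 := by
    intro n
    rw [hw]
    simp only [norm_smul, norm_inv, Complex.norm_real, Real.norm_eq_abs,
      abs_of_nonneg (norm_nonneg _)]
    field_simp [norm_ne_zero_iff.mpr (hv0 n)]
  have hwlt : ∀ n, ‖Th (w n) - χh • w n‖ ≤ ((n : ℝ) + 1)⁻¹ := by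
    intro n
    have hvn : (0:ℝ) < ‖v n‖ := norm_pos_iff.mpr (hv0 n)
    have h1 : Th (w n) - χh • w n = (‖v n‖ : ℂ)⁻¹ • (Th (v n) - χh • v n) := by
      rw [hw]
      simp only [map_smul, smul_sub, smul_comm χh]
    rw [h1, norm_smul]
    have h2 : ‖((‖v n‖ : ℂ))⁻¹‖ = ‖v n‖⁻¹ := by
      rw [norm_inv, Complex.norm_real, Real.norm_eq_abs, abs_of_nonneg (norm_nonneg _)]
    rw [h2]
    have := (hvlt n).le
    calc ‖v n‖⁻¹ * ‖Th (v n) - χh • v n‖ ≤ ‖v n‖⁻¹ * (((n:ℝ)+1)⁻¹ * ‖v n‖) := by gcongr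
      _ = ((n:ℝ)+1)⁻¹ := by field_simp
  -- compactness: extract convergent subsequence of Th (w n)
  have hball : Bornology.IsVonNBounded ℂ (Metric.closedBall (0:L) 1) :=
    NormedSpace.isVonNBounded_closedBall ℂ L 1
  obtain ⟨K, hK, hKsub⟩ :=
    IsCompactOperator.image_subset_compact_of_isVonNBounded
      (f := (Th : L →ₗ[ℂ] L)) hThc hball
  have hmemK : ∀ n, Th (w n) ∈ K := by
    intro n
    refine hKsub ⟨w n, ?_, rfl⟩
    simp [Metric.mem_closedBall, hwnorm n]
  obtain ⟨y, _, φ, hφ, hconv⟩ := hK.tendsto_subseq hmemK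
  -- the residuals tend to zero
  have hres : Filter.Tendsto (fun n => Th (w (φ n)) - χh • w (φ n)) Filter.atTop (nhds 0) := by
    apply squeeze_zero_norm (fun n => ?_) tendsto_one_div_add_atTop_nhds_zero_nat
    calc ‖Th (w (φ n)) - χh • w (φ n)‖ ≤ ((φ n : ℝ) + 1)⁻¹ := hwlt (φ n)
      _ ≤ ((n : ℝ) + 1)⁻¹ := by
          gcongr
          exact_mod_cast Nat.le_of_lt_succ (Nat.lt_succ_of_le (hφ.le_apply))
      _ = 1 / ((n : ℝ) + 1) := by rw [one_div]
  -- hence w (φ n) converges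
  have hwconv : Filter.Tendsto (fun n => w (φ n)) Filter.atTop (nhds (χh⁻¹ • y)) := by
    have h1 : Filter.Tendsto (fun n => Th (w (φ n)) - (Th (w (φ n)) - χh • w (φ n)))
        Filter.atTop (nhds (y - 0)) := hconv.sub hres
    have h2 : (fun n => Th (w (φ n)) - (Th (w (φ n)) - χh • w (φ n)))
        = fun n => χh • w (φ n) := by
      funext n; abel
    rw [h2, sub_zero] at h1
    have h3 := h1.const_smul (χh⁻¹)
    simpa [smul_smul, inv_mul_cancel₀ hχh] using h3
  set z := χh⁻¹ • y with hz
  have hzM : z ∈ M := hMclosed.mem_of_tendsto hwconv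
    (Filter.Eventually.of_forall fun n => hwM (φ n))
  have hznorm : ‖z‖ = 1 := by
    have h1 : Filter.Tendsto (fun n => ‖w (φ n)‖) Filter.atTop (nhds ‖z‖) :=
      hwconv.norm
    have h2 : Filter.Tendsto (fun n => ‖w (φ n)‖) Filter.atTop (nhds 1) := by
      simp only [hwnorm]
      exact tendsto_const_nhds
    exact tendsto_nhds_unique h1 h2
  have hzeig : Th z = χh • z := by
    have h1 : Filter.Tendsto (fun n => Th (w (φ n)) - χh • w (φ n)) Filter.atTop
        (nhds (Th z - χh • z)) := by
      exact ((Th.continuous.tendsto z).comp hwconv).sub (hwconv.const_smul χh)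
    have h2 := tendsto_nhds_unique h1 hres
    exact sub_eq_zero.mp h2
  have hz0 := hdisj z hzM hzeig
  rw [hz0, norm_zero] at hznorm
  norm_num at hznorm

set_option maxHeartbeats 1600000 in
theorem dist_to_eigenspace_le_residual
    {L : Type*} [NormedAddCommGroup L] [InnerProductSpace ℂ L] [CompleteSpace L]
    (Th : L →L[ℂ] L) (hThc : IsCompactOperator ⇑Th) (hThsa : IsSelfAdjoint Th)
    (χh : ℂ) (hχh : χh ≠ 0)
    (heig : LinearMap.ker ((Th - χh • (1 : L →L[ℂ] L)) : L →ₗ[ℂ] L) ≠ ⊥)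
    (χ : ℝ) (δ : ℝ) (hδ : 0 < δ)
    (hsep : ∀ μ ∈ spectrum ℂ Th, μ ≠ χh → δ ≤ ‖μ - (χ : ℂ)‖) :
    ∀ w : L, ‖w‖ = 1 →
      Metric.infDist w ((LinearMap.ker ((Th - χh • (1 : L →L[ℂ] L)) : L →ₗ[ℂ] L) : Submodule ℂ L) : Set L) ≤
        ‖Th w - (χ : ℂ) • w‖ / δ := by
  intro w hw
  set E := LinearMap.ker ((Th - χh • (1 : L →L[ℂ] L)) : L →ₗ[ℂ] L) with hE
  have hsym := ContinuousLinearMap.isSelfAdjoint_iff_isSymmetric.mp hThsa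
  have hEmem : ∀ x ∈ E, Th x = χh • x := by
    intro x hx
    have h2 : (Th - χh • (1 : L →L[ℂ] L)) x = 0 := hx
    simp only [ContinuousLinearMap.sub_apply, ContinuousLinearMap.smul_apply,
      ContinuousLinearMap.one_apply] at h2
    rwa [sub_eq_zero] at h2
  -- χh is in the spectrum, hence real
  have hχh_spec : χh ∈ spectrum ℂ Th := by
    rw [spectrum.mem_iff]
    intro hunit
    obtain ⟨x, hxE, hx0⟩ := (Submodule.ne_bot_iff _).mp heig
    have h1 : (algebraMap ℂ (L →L[ℂ] L) χh - Th) x = 0 := by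
      rw [Algebra.algebraMap_eq_smul_one]
      have h2 : Th x = χh • x := hEmem x hxE
      simp only [ContinuousLinearMap.sub_apply, ContinuousLinearMap.smul_apply,
        ContinuousLinearMap.one_apply, h2, sub_self]
    apply hx0
    calc x = (↑hunit.unit⁻¹ * ↑hunit.unit : L →L[ℂ] L) x := by
          rw [hunit.unit.inv_mul, ContinuousLinearMap.one_apply]
      _ = (↑hunit.unit⁻¹ : L →L[ℂ] L) ((↑hunit.unit : L →L[ℂ] L) x) := by
          rw [ContinuousLinearMap.mul_apply]
      _ = (↑hunit.unit⁻¹ : L →L[ℂ] L) ((algebraMap ℂ (L →L[ℂ] L) χh - Th) x) := by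
          rw [IsUnit.unit_spec]
      _ = 0 := by rw [h1, map_zero]
  have hχh_re : χh = (χh.re : ℂ) := hThsa.mem_spectrum_eq_re hχh_spec
  have hχh_conj : (starRingEnd ℂ) χh = χh := by
    rw [hχh_re]; exact Complex.conj_ofReal _
  -- invariance of the orthogonal complement
  have hMinv : ∀ v ∈ Eᗮ, Th v ∈ Eᗮ := by
    intro v hv
    rw [Submodule.mem_orthogonal] at hv ⊢
    intro x hx
    have h1 : ⟪ Th x, v ⟫ = ⟪ x, Th v ⟫ := hsym x v
    rw [← h1, hEmem x hx, inner_smul_left, hv x hx, mul_zero]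
  haveI : CompleteSpace (Eᗮ : Submodule ℂ L) := inferInstance
  -- the restricted operator
  set S : (Eᗮ : Submodule ℂ L) →L[ℂ] (Eᗮ : Submodule ℂ L) :=
    (Th.comp (Eᗮ : Submodule ℂ L).subtypeL).codRestrict Eᗮ (fun v => hMinv ↑v v.2) with hS
  have hSapp : ∀ v : (Eᗮ : Submodule ℂ L), ((S v : (Eᗮ : Submodule ℂ L)) : L) = Th ↑v :=
    fun v => rfl
  have hSsa : IsSelfAdjoint S := by
    rw [ContinuousLinearMap.isSelfAdjoint_iff_isSymmetric]
    intro x y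
    show ⟪ ((S x : (Eᗮ : Submodule ℂ L)) : L), (y : L) ⟫
        = ⟪ (x : L), ((S y : (Eᗮ : Submodule ℂ L)) : L) ⟫
    rw [hSapp, hSapp]
    exact hsym ↑x ↑y
  -- quantitative injectivity at χh on the complement, from compactness
  obtain ⟨c, hc, hcb⟩ := aux_compact_boundedBelow Th hThc χh hχh Eᗮ
    (Submodule.isClosed_orthogonal E)
    (by
      intro z hzM hzeig
      have hzE : z ∈ E := by
        show (Th - χh • (1 : L →L[ℂ] L)) z = 0
        simp only [ContinuousLinearMap.sub_apply, ContinuousLinearMap.smul_apply,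
          ContinuousLinearMap.one_apply, hzeig, sub_self]
      have := Submodule.inner_right_of_mem_orthogonal hzE hzM
      exact inner_self_eq_zero.mp this)
  have hA1bb : ∀ v : (Eᗮ : Submodule ℂ L),
      c * ‖v‖ ≤ ‖(χh • (1 : (Eᗮ : Submodule ℂ L) →L[ℂ] (Eᗮ : Submodule ℂ L)) - S) v‖ := by
    intro v
    have h1 := hcb ↑v v.2
    have h2 : ‖(χh • (1 : (Eᗮ : Submodule ℂ L) →L[ℂ] (Eᗮ : Submodule ℂ L)) - S) v‖
        = ‖χh • (v : L) - Th ↑v‖ := rfl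
    rw [h2, norm_sub_rev]
    exact h1
  have hA1sa : IsSelfAdjoint
      (χh • (1 : (Eᗮ : Submodule ℂ L) →L[ℂ] (Eᗮ : Submodule ℂ L)) - S) := by
    rw [ContinuousLinearMap.isSelfAdjoint_iff_isSymmetric]
    have hs := ContinuousLinearMap.isSelfAdjoint_iff_isSymmetric.mp hSsa
    intro x y
    have h := hs x y
    simp only [ContinuousLinearMap.coe_coe] at h ⊢
    simp only [ContinuousLinearMap.sub_apply, ContinuousLinearMap.smul_apply,
      ContinuousLinearMap.one_apply]
    rw [inner_sub_left, inner_sub_right, inner_smul_left, inner_smul_right, hχh_conj, h]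
  have hA1unit := aux_selfAdjoint_boundedBelow_isUnit _ hA1sa hc hA1bb
  have hχh_notS : χh ∉ spectrum ℂ S := by
    rw [spectrum.notMem_iff, Algebra.algebraMap_eq_smul_one]
    exact hA1unit
  -- other spectral points of S are spectral points of Th
  have hsubspec : ∀ μ : ℂ, μ ∈ spectrum ℂ S → μ = (μ.re : ℂ) → μ ≠ χh →
      μ ∈ spectrum ℂ Th := by
    intro μ hμS hμre hμχh
    by_contra hμTh
    rw [spectrum.notMem_iff] at hμTh
    have huval : (↑hμTh.unit : L →L[ℂ] L) = algebraMap ℂ (L →L[ℂ] L) μ - Th :=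
      hμTh.unit_spec
    have hμconj : (starRingEnd ℂ) μ = μ := by
      rw [hμre]; exact Complex.conj_ofReal _
    have husymm : ∀ x y : L, ⟪ (↑hμTh.unit : L →L[ℂ] L) x, y ⟫
        = ⟪ x, (↑hμTh.unit : L →L[ℂ] L) y ⟫ := by
      intro x y
      rw [huval, Algebra.algebraMap_eq_smul_one]
      simp only [ContinuousLinearMap.sub_apply, ContinuousLinearMap.smul_apply,
        ContinuousLinearMap.one_apply]
      have h := hsym x y
      simp only [ContinuousLinearMap.coe_coe] at h
      rw [inner_sub_left, inner_sub_right, inner_smul_left, inner_smul_right, hμconj, h]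
    have hEu : ∀ x ∈ E, (↑hμTh.unit : L →L[ℂ] L) x = (μ - χh) • x := by
      intro x hx
      rw [huval, Algebra.algebraMap_eq_smul_one]
      simp only [ContinuousLinearMap.sub_apply, ContinuousLinearMap.smul_apply,
        ContinuousLinearMap.one_apply]
      rw [hEmem x hx, sub_smul]
    have huu : ∀ y : L, (↑hμTh.unit : L →L[ℂ] L) ((↑hμTh.unit⁻¹ : L →L[ℂ] L) y) = y := by
      intro y
      rw [← ContinuousLinearMap.mul_apply, hμTh.unit.mul_inv, ContinuousLinearMap.one_apply]
    have hinv_mem : ∀ v : (Eᗮ : Submodule ℂ L), (↑hμTh.unit⁻¹ : L →L[ℂ] L) ↑v ∈ Eᗮ := by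
      intro v
      rw [Submodule.mem_orthogonal]
      intro x hx
      have hx' : x = (μ - χh)⁻¹ • ((↑hμTh.unit : L →L[ℂ] L) x) := by
        rw [hEu x hx, smul_smul, inv_mul_cancel₀ (sub_ne_zero.mpr hμχh), one_smul]
      calc ⟪ x, (↑hμTh.unit⁻¹ : L →L[ℂ] L) ↑v ⟫
          = (starRingEnd ℂ) ((μ - χh)⁻¹)
            * ⟪ (↑hμTh.unit : L →L[ℂ] L) x, (↑hμTh.unit⁻¹ : L →L[ℂ] L) ↑v ⟫ := by
            conv_lhs => rw [hx']
            rw [inner_smul_left]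
        _ = (starRingEnd ℂ) ((μ - χh)⁻¹)
            * ⟪ x, (↑hμTh.unit : L →L[ℂ] L) ((↑hμTh.unit⁻¹ : L →L[ℂ] L) ↑v) ⟫ := by
            rw [husymm]
        _ = (starRingEnd ℂ) ((μ - χh)⁻¹) * ⟪ x, (v : L) ⟫ := by rw [huu]
        _ = 0 := by
            rw [(Submodule.mem_orthogonal _ _).mp v.2 x hx, mul_zero]
    set R : (Eᗮ : Submodule ℂ L) →L[ℂ] (Eᗮ : Submodule ℂ L) :=
      ((↑hμTh.unit⁻¹ : L →L[ℂ] L).comp (Eᗮ : Submodule ℂ L).subtypeL).codRestrict Eᗮ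
        hinv_mem with hR
    have hSval : ∀ v : (Eᗮ : Submodule ℂ L),
        (((algebraMap ℂ ((Eᗮ : Submodule ℂ L) →L[ℂ] (Eᗮ : Submodule ℂ L)) μ - S) v
          : (Eᗮ : Submodule ℂ L)) : L) = (↑hμTh.unit : L →L[ℂ] L) ↑v := by
      intro v
      rw [huval, Algebra.algebraMap_eq_smul_one]
      simp only [ContinuousLinearMap.sub_apply, ContinuousLinearMap.smul_apply,
        ContinuousLinearMap.one_apply, Submodule.coe_sub, Submodule.coe_smul]
      rfl
    have hRval : ∀ v : (Eᗮ : Submodule ℂ L),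
        ((R v : (Eᗮ : Submodule ℂ L)) : L) = (↑hμTh.unit⁻¹ : L →L[ℂ] L) ↑v :=
      fun v => rfl
    have hunitS : IsUnit (algebraMap ℂ ((Eᗮ : Submodule ℂ L) →L[ℂ] (Eᗮ : Submodule ℂ L)) μ
        - S) := by
      refine ⟨⟨_, R, ?_, ?_⟩, rfl⟩
      · ext v
        rw [ContinuousLinearMap.mul_apply, ContinuousLinearMap.one_apply]
        rw [hSval (R v), hRval v, huu]
      · ext v
        rw [ContinuousLinearMap.mul_apply, ContinuousLinearMap.one_apply]
        rw [hRval _, hSval v, ← ContinuousLinearMap.mul_apply, hμTh.unit.inv_mul,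
          ContinuousLinearMap.one_apply]
    exact (spectrum.notMem_iff.mpr hunitS) hμS
  -- the shifted operator on the complement has spectrum away from zero
  have hspecB : ∀ z ∈ spectrum ℂ
      ((χ : ℂ) • (1 : (Eᗮ : Submodule ℂ L) →L[ℂ] (Eᗮ : Submodule ℂ L)) - S), δ ≤ ‖z‖ := by
    intro z hz
    have hz' : z ∈ spectrum ℂ
        (algebraMap ℂ ((Eᗮ : Submodule ℂ L) →L[ℂ] (Eᗮ : Submodule ℂ L)) ((χ:ℂ)) - S) := by
      rwa [Algebra.algebraMap_eq_smul_one]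
    rw [← spectrum.singleton_sub_eq] at hz'
    obtain ⟨a, ha, μ, hμ, hzz⟩ := Set.mem_sub.mp hz'
    rw [Set.mem_singleton_iff] at ha
    subst ha
    have hμre : μ = (μ.re : ℂ) := by exact IsSelfAdjoint.mem_spectrum_eq_re (a := S) hSsa hμ
    have hμχh : μ ≠ χh := by
      intro h
      rw [h] at hμ
      exact hχh_notS hμ
    have hμTh := hsubspec μ hμ hμre hμχh
    have h1 := hsep μ hμTh hμχh
    rw [← hzz, norm_sub_rev]
    exact h1
  have hχnotS : ((χ:ℂ)) ∉ spectrum ℂ S := by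
    intro hmem
    by_cases hcc : ((χ:ℂ)) = χh
    · rw [hcc] at hmem
      exact hχh_notS hmem
    · have h1 := hsubspec _ hmem (by simp) hcc
      have h2 := hsep _ h1 hcc
      simp at h2
      linarith
  have hBunit : IsUnit
      ((χ : ℂ) • (1 : (Eᗮ : Submodule ℂ L) →L[ℂ] (Eᗮ : Submodule ℂ L)) - S) := by
    rw [← Algebra.algebraMap_eq_smul_one]
    exact spectrum.notMem_iff.mp hχnotS
  have hBsa : IsSelfAdjoint
      ((χ : ℂ) • (1 : (Eᗮ : Submodule ℂ L) →L[ℂ] (Eᗮ : Submodule ℂ L)) - S) := by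
    rw [ContinuousLinearMap.isSelfAdjoint_iff_isSymmetric]
    have hs := ContinuousLinearMap.isSelfAdjoint_iff_isSymmetric.mp hSsa
    intro x y
    have h := hs x y
    simp only [ContinuousLinearMap.coe_coe] at h ⊢
    simp only [ContinuousLinearMap.sub_apply, ContinuousLinearMap.smul_apply,
      ContinuousLinearMap.one_apply]
    rw [inner_sub_left, inner_sub_right, inner_smul_left, inner_smul_right,
      Complex.conj_ofReal, h]
  have hbound := aux_unit_bound _ hBsa hδ hspecB hBunit
  -- assemble
  have hEclosed : IsClosed (E : Set L) := ContinuousLinearMap.isClosed_ker (Th - χh • (1 : L →L[ℂ] L))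
  haveI : CompleteSpace E := hEclosed.completeSpace_coe
  set p : L := ↑(Submodule.orthogonalProjectionOnto E w) with hp
  have hpE : p ∈ E := (Submodule.orthogonalProjectionOnto E w).2
  set vv : L := w - p with hvv
  have hvvM : vv ∈ Eᗮ := Submodule.sub_starProjection_mem_orthogonal (K := E) w
  have hdist : Metric.infDist w (E : Set L) ≤ ‖vv‖ := by
    have h1 := Metric.infDist_le_dist_of_mem (x := w) (s := (E : Set L)) hpE
    rwa [dist_eq_norm] at h1
  have hkey : δ * ‖vv‖ ≤ ‖Th vv - (χ:ℂ) • vv‖ := by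
    have h1 := hbound ⟨vv, hvvM⟩
    have h2 : ‖((χ : ℂ) • (1 : (Eᗮ : Submodule ℂ L) →L[ℂ] (Eᗮ : Submodule ℂ L)) - S)
        (⟨vv, hvvM⟩ : (Eᗮ : Submodule ℂ L))‖ = ‖(χ:ℂ) • vv - Th vv‖ := rfl
    have h3 : ‖(⟨vv, hvvM⟩ : (Eᗮ : Submodule ℂ L))‖ = ‖vv‖ := rfl
    rw [h2, h3] at h1
    calc δ * ‖vv‖ ≤ ‖(χ:ℂ) • vv - Th vv‖ := h1
      _ = ‖Th vv - (χ:ℂ) • vv‖ := norm_sub_rev _ _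
  have horthcomp : ‖Th vv - (χ:ℂ) • vv‖ ≤ ‖Th w - (χ:ℂ) • w‖ := by
    have hdecomp : Th w - (χ:ℂ) • w = ((χh - χ) • p) + (Th vv - (χ:ℂ) • vv) := by
      have hThp : Th p = χh • p := hEmem p hpE
      have hwp : w = p + vv := by rw [hvv]; abel
      calc Th w - (χ:ℂ) • w = Th (p + vv) - (χ:ℂ) • (p + vv) := by rw [← hwp]
        _ = (Th p - (χ:ℂ) • p) + (Th vv - (χ:ℂ) • vv) := by
            rw [map_add, smul_add]; abel
        _ = ((χh - χ) • p) + (Th vv - (χ:ℂ) • vv) := by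
            rw [hThp, sub_smul]
    have hinner : ⟪ (χh - χ) • p, Th vv - (χ:ℂ) • vv ⟫ = 0 := by
      apply Submodule.inner_right_of_mem_orthogonal (K := E)
      · exact E.smul_mem _ hpE
      · exact Submodule.sub_mem _ (hMinv vv hvvM) (Submodule.smul_mem _ _ hvvM)
    have hpyth := norm_add_sq_eq_norm_sq_add_norm_sq_of_inner_eq_zero _ _ hinner
    rw [hdecomp]
    nlinarith [norm_nonneg ((χh - χ) • p), norm_nonneg (Th vv - (χ:ℂ) • vv),
      norm_nonneg (((χh - χ) • p) + (Th vv - (χ:ℂ) • vv))]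
  calc Metric.infDist w (E : Set L) ≤ ‖vv‖ := hdist
    _ ≤ ‖Th w - (χ:ℂ) • w‖ / δ := by
        rw [le_div_iff₀ hδ]
        calc ‖vv‖ * δ = δ * ‖vv‖ := mul_comm _ _
          _ ≤ ‖Th vv - (χ:ℂ) • vv‖ := hkey
          _ ≤ ‖Th w - (χ:ℂ) • w‖ := horthcomp
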